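/- For all X,Y ∈ 𝔪 the Ricci tensor of the connection Λ^t satisfies Ric^t(X,Y) := Σ_i ⟨R^t(X,Z_i)Z_i, Y⟩ = Σ_i [ (t−t²)⟨[X,Z_i]_𝔪,[Y,Z_i]_𝔪⟩ + Q_𝔥([X,Z_i]_𝔥,[Y,Z_i]_𝔥) ], and consequently the scalar curvature satisfies Scal^t := Σ_j Ric^t(Z_j,Z_j) = Σ_{i,j} [ (t−t²)⟨[Z_i,Z_j]_𝔪,[Z_i,Z_j]_𝔪⟩ + Q_𝔥([Z_i,Z_j]_𝔥,[Z_i,Z_j]_𝔥) ]. -/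
import Mathlib


open scoped BigOperators

/-- Curvature `R^t(X,Y)Z` of the connection `Λ^t(X)Y = t[X,Y]_𝔪`. -/
noncomputable def curvRt {𝔤 : Type*} [LieRing 𝔤] [LieAlgebra ℝ 𝔤]
    (p𝔥 p𝔪 : 𝔤 →ₗ[ℝ] 𝔤) (t : ℝ) (x y z : 𝔤) : 𝔤 :=
  t • p𝔪 ⁅x, t • p𝔪 ⁅y, z⁆⁆ - t • p𝔪 ⁅y, t • p𝔪 ⁅x, z⁆⁆
    - t • p𝔪 ⁅p𝔪 ⁅x, y⁆, z⁆ - ⁅p𝔥 ⁅x, y⁆, z⁆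

/-- `Ric^t(X,Y) = Σ_i [(t−t²)⟨[X,Z_i]_𝔪,[Y,Z_i]_𝔪⟩ + Q_𝔥([X,Z_i]_𝔥,[Y,Z_i]_𝔥)]`
and `Scal^t = Σ_{i,j} [(t−t²)⟨[Z_i,Z_j]_𝔪,[Z_i,Z_j]_𝔪⟩ + Q_𝔥([Z_i,Z_j]_𝔥,[Z_i,Z_j]_𝔥)]`. -/
theorem stmt3
    {𝔤 : Type*} [LieRing 𝔤] [LieAlgebra ℝ 𝔤] [FiniteDimensional ℝ 𝔤]
    (𝔥 𝔪 : Submodule ℝ 𝔤)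
    (p𝔥 p𝔪 : 𝔤 →ₗ[ℝ] 𝔤)
    (hsum : ∀ x, p𝔥 x + p𝔪 x = x)
    (hmem𝔥 : ∀ x, p𝔥 x ∈ 𝔥) (hmem𝔪 : ∀ x, p𝔪 x ∈ 𝔪)
    (hid𝔥 : ∀ x ∈ 𝔥, p𝔥 x = x) (hid𝔪 : ∀ x ∈ 𝔪, p𝔪 x = x)
    (hsub : ∀ x ∈ 𝔥, ∀ y ∈ 𝔥, ⁅x, y⁆ ∈ 𝔥)
    (hhm : ∀ x ∈ 𝔥, ∀ y ∈ 𝔪, ⁅x, y⁆ ∈ 𝔪)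
    (Q : LinearMap.BilinForm ℝ 𝔤)
    (hQsymm : ∀ x y, Q x y = Q y x)
    (hQinv : ∀ w u v : 𝔤, Q ⁅w, u⁆ v + Q u ⁅w, v⁆ = 0)
    (hQ𝔥𝔪 : ∀ x ∈ 𝔥, ∀ y ∈ 𝔪, Q x y = 0)
    (hQpos𝔪 : ∀ x ∈ 𝔪, x ≠ 0 → 0 < Q x x)
    (hQ𝔥nd : ∀ x ∈ 𝔥, (∀ y ∈ 𝔥, Q x y = 0) → x = 0)
    {n : ℕ} (Z : Fin n → 𝔤) (hZ𝔪 : ∀ i, Z i ∈ 𝔪)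
    (hZon : ∀ i j, Q (Z i) (Z j) = if i = j then 1 else 0)
    (hZspan : Submodule.span ℝ (Set.range Z) = 𝔪)
    (t : ℝ) :
    (∀ x ∈ 𝔪, ∀ y ∈ 𝔪,
      ∑ i, Q (curvRt p𝔥 p𝔪 t x (Z i) (Z i)) y =
        ∑ i, ((t - t ^ 2) * Q (p𝔪 ⁅x, Z i⁆) (p𝔪 ⁅y, Z i⁆)
          + Q (p𝔥 ⁅x, Z i⁆) (p𝔥 ⁅y, Z i⁆))) ∧
    (∑ j, ∑ i, Q (curvRt p𝔥 p𝔪 t (Z j) (Z i) (Z i)) (Z j) =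
      ∑ i, ∑ j, ((t - t ^ 2) * Q (p𝔪 ⁅Z i, Z j⁆) (p𝔪 ⁅Z i, Z j⁆)
        + Q (p𝔥 ⁅Z i, Z j⁆) (p𝔥 ⁅Z i, Z j⁆))) := by
  have inv : ∀ w u v : 𝔤, Q ⁅w, u⁆ v = - Q u ⁅w, v⁆ := by
    intro w u v; linarith [hQinv w u v]
  -- Q (p𝔪 w) y = Q w y for y ∈ 𝔪
  have e1 : ∀ w : 𝔤, ∀ y ∈ 𝔪, Q (p𝔪 w) y = Q w y := by
    intro w y hy
    conv_rhs => rw [← hsum w]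
    rw [map_add, LinearMap.add_apply, hQ𝔥𝔪 _ (hmem𝔥 w) _ hy, zero_add]
  -- Q (p𝔪 a) b = Q (p𝔪 a) (p𝔪 b)
  have e2 : ∀ a b : 𝔤, Q (p𝔪 a) b = Q (p𝔪 a) (p𝔪 b) := by
    intro a b
    conv_lhs => rw [← hsum b]
    rw [map_add, hQsymm _ (p𝔥 b), hQ𝔥𝔪 _ (hmem𝔥 b) _ (hmem𝔪 a), zero_add]
  have e3 : ∀ a b : 𝔤, Q (p𝔥 a) b = Q (p𝔥 a) (p𝔥 b) := by
    intro a b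
    conv_lhs => rw [← hsum b]
    rw [map_add, hQ𝔥𝔪 _ (hmem𝔥 a) _ (hmem𝔪 b), add_zero]
  have key : ∀ x : 𝔤, ∀ y ∈ 𝔪, ∀ z : 𝔤,
      Q (curvRt p𝔥 p𝔪 t x z z) y =
        (t - t ^ 2) * Q (p𝔪 ⁅x, z⁆) (p𝔪 ⁅y, z⁆)
          + Q (p𝔥 ⁅x, z⁆) (p𝔥 ⁅y, z⁆) := by
    intro x y hy z
    have hA : Q ⁅p𝔪 ⁅x, z⁆, z⁆ y = - Q (p𝔪 ⁅x, z⁆) (p𝔪 ⁅y, z⁆) := by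
      have h1 : Q ⁅z, p𝔪 ⁅x, z⁆⁆ y = - Q (p𝔪 ⁅x, z⁆) ⁅z, y⁆ := inv _ _ _
      have h2 : (⁅p𝔪 ⁅x, z⁆, z⁆ : 𝔤) = - ⁅z, p𝔪 ⁅x, z⁆⁆ := (lie_skew _ _).symm
      rw [h2, map_neg, LinearMap.neg_apply, h1, neg_neg, ← lie_skew z y,
        map_neg, e2 _ ⁅y, z⁆]
    have hB : Q ⁅p𝔥 ⁅x, z⁆, z⁆ y = - Q (p𝔥 ⁅x, z⁆) (p𝔥 ⁅y, z⁆) := by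
      have h1 : Q ⁅z, p𝔥 ⁅x, z⁆⁆ y = - Q (p𝔥 ⁅x, z⁆) ⁅z, y⁆ := inv _ _ _
      have h2 : (⁅p𝔥 ⁅x, z⁆, z⁆ : 𝔤) = - ⁅z, p𝔥 ⁅x, z⁆⁆ := (lie_skew _ _).symm
      rw [h2, map_neg, LinearMap.neg_apply, h1, neg_neg, ← lie_skew z y,
        map_neg, e3 _ ⁅y, z⁆]
    have hzz : (⁅z, z⁆ : 𝔤) = 0 := lie_self z
    simp only [curvRt, hzz, map_zero, smul_zero, lie_zero, zero_sub, map_sub,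
      map_neg, map_smul, lie_smul, LinearMap.sub_apply, LinearMap.neg_apply,
      LinearMap.smul_apply, smul_eq_mul]
    rw [e1 _ _ hy, e1 _ _ hy]
    have hza : (⁅z, p𝔪 ⁅x, z⁆⁆ : 𝔤) = - ⁅p𝔪 ⁅x, z⁆, z⁆ := (lie_skew _ _).symm
    rw [hza, map_neg, LinearMap.neg_apply, hA, hB]
    ring
  constructor
  · intro x hx y hy
    exact Finset.sum_congr rfl fun i _ => key x y hy (Z i)
  · exact Finset.sum_congr rfl fun j _ =>
      Finset.sum_congr rfl fun i _ => key (Z j) (Z j) (hZ𝔪 j) (Z i)
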